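/- Let X be a real Banach space and J : X → ℝ a C¹ functional satisfying the Palais–Smale condition. If u₁ and u₂ are two distinct points of X which are both local minima of J (or both local maxima of J), then J admits a third critical point u₃ ∉ {u₁, u₂}, i.e. a point u₃ with J'(u₃) = 0 and u₃ ≠ u₁, u₃ ≠ u₂. -/

import Mathlib

open Filter Topology

/-- Ekeland variational principle, basic form. -/
theorem my_ekeland {Y : Type*} [MetricSpace Y] [CompleteSpace Y] (f : Y → ℝ)
    (hf : LowerSemicontinuous f) (B : ℝ) (hB : ∀ y, B ≤ f y) (ε : ℝ) (hε : 0 < ε) (x₀ : Y) :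
    ∃ y, (f y + ε * dist x₀ y ≤ f x₀) ∧ ∀ z, f y ≤ f z + ε * dist y z := by
  classical
  set S : Y → Set Y := fun x => {y | f y + ε * dist x y ≤ f x} with hS
  have hxS : ∀ x, x ∈ S x := by intro x; simp [hS]
  have hbdd : ∀ x, BddBelow (f '' S x) := by
    intro x; exact ⟨B, by rintro r ⟨y, -, rfl⟩; exact hB y⟩
  set m : Y → ℝ := fun x => sInf (f '' S x) with hm
  have hmle : ∀ x, ∀ y ∈ S x, m x ≤ f y := by
    intro x y hy; exact csInf_le (hbdd x) ⟨y, hy, rfl⟩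
  have hmx : ∀ x, m x ≤ f x := fun x => hmle x x (hxS x)
  have hstep : ∀ x, ∃ y, y ∈ S x ∧ f y ≤ (m x + f x) / 2 := by
    intro x
    rcases eq_or_lt_of_le (hmx x) with h | h
    · exact ⟨x, hxS x, by linarith⟩
    · have h2 : sInf (f '' S x) < (m x + f x) / 2 := by
        have : m x < (m x + f x) / 2 := by linarith
        simpa [hm] using this
      rcases exists_lt_of_csInf_lt ⟨f x, Set.mem_image_of_mem f (hxS x)⟩ h2 with ⟨r, ⟨y, hy, rfl⟩, hr⟩
      exact ⟨y, hy, le_of_lt hr⟩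
  choose g hg1 hg2 using hstep
  set a : ℕ → Y := fun n => g^[n] x₀ with ha
  have hsucc : ∀ n, a (n + 1) = g (a n) := by
    intro n; rw [ha]; simp [Function.iterate_succ_apply']
  have haS : ∀ n, a (n + 1) ∈ S (a n) := fun n => by rw [hsucc]; exact hg1 _
  have htrans : ∀ x y z, y ∈ S x → z ∈ S y → z ∈ S x := by
    intro x y z hy hz
    simp only [hS, Set.mem_setOf_eq] at *
    have := dist_triangle x y z
    nlinarith [hε]
  have hchain : ∀ n k, a (n + k) ∈ S (a n) := by
    intro n k
    induction k with
    | zero => exact hxS _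
    | succ k ih => exact htrans _ _ _ ih (by rw [show n + (k+1) = (n+k)+1 by ring]; exact haS _)
  have hchain' : ∀ n p, n ≤ p → a p ∈ S (a n) := by
    intro n p h; obtain ⟨k, rfl⟩ := Nat.exists_eq_add_of_le h; exact hchain n k
  have hfmono : ∀ n p, n ≤ p → f (a p) ≤ f (a n) := by
    intro n p h
    have := hchain' n p h
    simp only [hS, Set.mem_setOf_eq] at this
    nlinarith [dist_nonneg (x := a n) (y := a p)]
  have hdist : ∀ n p, n ≤ p → ε * dist (a n) (a p) ≤ f (a n) - f (a p) := by
    intro n p h; have := hchain' n p h; simp only [hS, Set.mem_setOf_eq] at this; linarith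
  have hbdd' : BddBelow (Set.range fun n => f (a n)) := ⟨B, by rintro r ⟨n, rfl⟩; exact hB _⟩
  set L : ℝ := ⨅ n, f (a n) with hL
  have hLle : ∀ n, L ≤ f (a n) := fun n => ciInf_le hbdd' n
  have hfL : Tendsto (fun n => f (a n)) atTop (𝓝 L) :=
    tendsto_atTop_ciInf (fun n p h => hfmono n p h) hbdd'
  have hcauchy : CauchySeq a := by
    apply cauchySeq_of_le_tendsto_0 (fun n => (f (a n) - L) / ε)
    · intro n p N hn hp
      rcases le_total n p with h | h
      · calc dist (a n) (a p) ≤ (f (a n) - f (a p)) / ε := by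
              rw [le_div_iff₀ hε, mul_comm]; exact hdist n p h
          _ ≤ (f (a N) - L) / ε := by
              gcongr
              exacts [hfmono N n hn, hLle p]
      · rw [dist_comm]
        calc dist (a p) (a n) ≤ (f (a p) - f (a n)) / ε := by
              rw [le_div_iff₀ hε, mul_comm]; exact hdist p n h
          _ ≤ (f (a N) - L) / ε := by
              gcongr
              exacts [hfmono N p hp, hLle n]
    · have h0 : Tendsto (fun n => (f (a n) - L) / ε) atTop (𝓝 ((L - L) / ε)) :=
        (hfL.sub tendsto_const_nhds).div_const ε
      simpa using h0
  obtain ⟨y, hy⟩ := cauchySeq_tendsto_of_complete hcauchy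
  have hyS : ∀ n, y ∈ S (a n) := by
    intro n
    by_contra hcon
    simp only [hS, Set.mem_setOf_eq, not_le] at hcon
    set κ := f y + ε * dist (a n) y - f (a n) with hκ
    have hκpos : 0 < κ := by linarith
    have h1 : ∀ᶠ p in atTop, f y - κ / 2 < f (a p) :=
      hy.eventually (hf y (f y - κ / 2) (by linarith))
    have hd : Tendsto (fun p => dist (a n) (a p)) atTop (𝓝 (dist (a n) y)) :=
      (Continuous.dist continuous_const continuous_id).continuousAt.tendsto.comp hy
    have h2 : ∀ᶠ p in atTop, dist (dist (a n) (a p)) (dist (a n) y) < κ / (4 * ε) :=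
      (Metric.tendsto_nhds.mp hd) _ (by positivity)
    have h3 : ∀ᶠ p in atTop, n ≤ p := eventually_ge_atTop n
    rcases (h1.and (h2.and h3)).exists with ⟨p, hp1, hp2, hp3⟩
    rw [Real.dist_eq, abs_lt] at hp2
    have hkey := hchain' n p hp3
    simp only [hS, Set.mem_setOf_eq] at hkey
    have hc : ε * (κ / (4 * ε)) = κ / 4 := by field_simp
    have h5 : ε * dist (a n) y - ε * dist (a n) (a p) < κ / 4 := by
      have h6 := mul_lt_mul_of_pos_left
        (show dist (a n) y - dist (a n) (a p) < κ / (4 * ε) by linarith [hp2.1]) hε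
      rw [mul_sub, hc] at h6
      linarith
    linarith [hκ]
  refine ⟨y, ?_, ?_⟩
  · have := hyS 0
    simpa [hS, ha] using this
  · intro z
    by_contra hcon
    push_neg at hcon
    have hzy : z ∈ S y := by
      simp only [hS, Set.mem_setOf_eq]; linarith
    have hzS : ∀ n, z ∈ S (a n) := fun n => htrans _ _ _ (hyS n) hzy
    have hfyz : f y ≤ f z := by
      by_contra hfc
      push_neg at hfc
      -- f (a (n+1)) ≤ (m (a n) + f (a n))/2 and m (a n) ≤ f z
      have hmz : ∀ n, m (a n) ≤ f z := fun n => hmle _ _ (hzS n)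
      have hfy : ∀ n, f y ≤ f (a n) := by
        intro n
        have := hyS n
        simp only [hS, Set.mem_setOf_eq] at this
        nlinarith [dist_nonneg (x := a n) (y := y)]
      -- f(a (n+1)) - f z ≤ (f (a n) - f z)/2, so f(a n) → ≤ f z; but f y ≤ f (a n)
      have key : ∀ n, f (a (n + 1)) - f z ≤ (f (a n) - f z) / 2 := by
        intro n
        have h2 := hg2 (a n)
        rw [← hsucc n] at h2
        have := hmz n
        linarith
      have hlim : L ≤ f z := by
        by_contra hL2
        push_neg at hL2
        -- eventually f (a n) < L + (L - f z) ... use: f(a(n+1)) - fz ≤ (f(a n) - fz)/2 with f(a n) ≥ L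
        have hev : ∀ᶠ n in atTop, f (a n) < L + (L - f z) / 2 :=
          hfL.eventually (Filter.Tendsto.eventually_lt_const (by linarith) tendsto_id)
        rcases hev.exists with ⟨n, hn⟩
        have := key n
        have := hLle (n + 1)
        linarith
      have := le_trans (le_ciInf hfy : f y ≤ L) hlim
      linarith
    have : dist y z = 0 := by nlinarith [dist_nonneg (x := y) (y := z)]
    have : y = z := by rwa [dist_eq_zero] at this
    subst this
    simp at hcon


section Lemmas
variable {X : Type*} [NormedAddCommGroup X] [NormedSpace ℝ X]

/-- If `J y ≤ J z + ε dist y z` for all `z` near `y`, then `‖J' y‖ ≤ ε`. -/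
theorem norm_deriv_le_of_varineq {J : X → ℝ} {J' : X →L[ℝ] ℝ} {y : X}
    (hd : HasFDerivAt J J' y) {ε ρ : ℝ} (hε : 0 ≤ ε) (hρ : 0 < ρ)
    (hvar : ∀ z, dist z y < ρ → J y ≤ J z + ε * dist y z) : ‖J'‖ ≤ ε := by
  have key : ∀ v : X, -(ε * ‖v‖) ≤ J' v := by
    intro v
    have hline : HasDerivAt (fun t : ℝ => y + t • v) v 0 := by
      simpa using ((hasDerivAt_id (0:ℝ)).smul_const v).const_add y
    have hφ : HasDerivAt (fun t : ℝ => J (y + t • v)) (J' v) 0 := by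
      have h0 : HasFDerivAt J J' (y + (0:ℝ) • v) := by simpa using hd
      exact h0.comp_hasDerivAt 0 hline
    have hslope : Tendsto (slope (fun t : ℝ => J (y + t • v)) 0) (𝓝[>] 0) (𝓝 (J' v)) :=
      hasDerivWithinAt_iff_tendsto_slope' (s := Set.Ioi (0:ℝ)) (by simp) |>.mp
        (hφ.hasDerivWithinAt)
    refine ge_of_tendsto hslope ?_
    have hmem : Set.Ioo (0:ℝ) (ρ / (‖v‖ + 1)) ∈ 𝓝[>] (0:ℝ) :=
      Ioo_mem_nhdsGT_of_mem ⟨le_refl _, by positivity⟩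
    filter_upwards [hmem] with t ht
    have ht0 : 0 < t := ht.1
    have hdz : dist (y + t • v) y = t * ‖v‖ := by
      simp [dist_eq_norm, norm_smul, abs_of_pos ht0]
    have hlt : dist (y + t • v) y < ρ := by
      rw [hdz]
      calc t * ‖v‖ ≤ t * (‖v‖ + 1) := by nlinarith [norm_nonneg v]
        _ < ρ / (‖v‖ + 1) * (‖v‖ + 1) := by
            apply mul_lt_mul_of_pos_right ht.2 (by positivity)
        _ = ρ := by field_simp
    have := hvar _ hlt
    rw [dist_comm] at hdz
    rw [hdz] at this
    have hslope_eq : slope (fun t : ℝ => J (y + t • v)) 0 t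
        = (J (y + t • v) - J y) / t := by
      simp [slope, div_eq_inv_mul]
    rw [hslope_eq, le_div_iff₀ ht0]
    nlinarith
  refine J'.opNorm_le_bound hε ?_
  intro v
  have h1 := key v
  have h2 := key (-v)
  rw [map_neg, norm_neg] at h2
  rw [Real.norm_eq_abs, abs_le]
  constructor <;> linarith

/-- From a direction-norm bound failure, get a steep descent direction. -/
theorem exists_descent_dir (T : X →L[ℝ] ℝ) {r : ℝ} (hr : 0 ≤ r) (h : r < ‖T‖) :
    ∃ v : X, ‖v‖ ≤ 1 ∧ T v < -r := by
  by_contra hcon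
  push_neg at hcon
  have hb : ∀ v : X, ‖v‖ ≤ 1 → |T v| ≤ r := by
    intro v hv
    have h1 := hcon v hv
    have h2 := hcon (-v) (by simpa using hv)
    rw [map_neg] at h2
    rw [abs_le]; constructor <;> linarith
  have : ‖T‖ ≤ r := by
    refine T.opNorm_le_bound hr ?_
    intro v
    rcases eq_or_ne v 0 with rfl | hv0
    · simp
    · have hnv : 0 < ‖v‖ := norm_pos_iff.mpr hv0
      have hu : ‖(‖v‖⁻¹ • v)‖ = 1 := by
        rw [norm_smul, Real.norm_eq_abs, abs_of_pos (inv_pos.mpr hnv), inv_mul_cancel₀ hnv.ne']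
      have hb2 := hb (‖v‖⁻¹ • v) (le_of_eq hu)
      rw [map_smul, smul_eq_mul, abs_mul, abs_of_pos (inv_pos.mpr hnv)] at hb2
      rw [Real.norm_eq_abs]
      calc |T v| = ‖v‖ * (‖v‖⁻¹ * |T v|) := by field_simp
        _ ≤ ‖v‖ * r := mul_le_mul_of_nonneg_left hb2 hnv.le
        _ = r * ‖v‖ := mul_comm _ _
  linarith

end Lemmas


section PS
variable {X : Type*} [NormedAddCommGroup X] [NormedSpace ℝ X]

theorem crit_of_PS (J : X → ℝ) (J' : X → (X →L[ℝ] ℝ)) (hJc : Continuous J)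
    (hcont : Continuous J')
    (hPS : ∀ z : ℕ → X,
      (∃ μ : ℝ, Tendsto (fun j => J (z j)) atTop (𝓝 μ)) →
      Tendsto (fun j => ‖J' (z j)‖) atTop (𝓝 (0 : ℝ)) →
      ∃ (w : X) (σ : ℕ → ℕ), StrictMono σ ∧ Tendsto (fun j => z (σ j)) atTop (𝓝 w))
    (z : ℕ → X) (μ : ℝ) (hμ : Tendsto (fun j => J (z j)) atTop (𝓝 μ))
    (h0 : Tendsto (fun j => ‖J' (z j)‖) atTop (𝓝 0)) :
    ∃ (w : X) (σ : ℕ → ℕ), J' w = 0 ∧ J w = μ ∧ StrictMono σ ∧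
      Tendsto (fun j => z (σ j)) atTop (𝓝 w) := by
  obtain ⟨w, σ, hσ, hw⟩ := hPS z ⟨μ, hμ⟩ h0
  have htop : Tendsto σ atTop atTop := hσ.tendsto_atTop
  have l1 : Tendsto (fun j => ‖J' (z (σ j))‖) atTop (𝓝 ‖J' w‖) :=
    ((hcont.tendsto w).comp hw).norm
  have l2 : Tendsto (fun j => ‖J' (z (σ j))‖) atTop (𝓝 0) := h0.comp htop
  have hJ'w : ‖J' w‖ = 0 := tendsto_nhds_unique l1 l2
  have l3 : Tendsto (fun j => J (z (σ j))) atTop (𝓝 (J w)) := (hJc.tendsto w).comp hw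
  have l4 : Tendsto (fun j => J (z (σ j))) atTop (𝓝 μ) := hμ.comp htop
  exact ⟨w, σ, norm_eq_zero.mp hJ'w, tendsto_nhds_unique l3 l4, hσ, hw⟩

end PS

section Deg
variable {X : Type*} [NormedAddCommGroup X] [NormedSpace ℝ X] [CompleteSpace X]

theorem deg_case (J : X → ℝ) (J' : X → (X →L[ℝ] ℝ))
    (hdiff : ∀ w : X, HasFDerivAt J (J' w) w) (hcont : Continuous J')
    (hPS : ∀ z : ℕ → X,
      (∃ μ : ℝ, Tendsto (fun j => J (z j)) atTop (𝓝 μ)) →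
      Tendsto (fun j => ‖J' (z j)‖) atTop (𝓝 (0 : ℝ)) →
      ∃ (w : X) (σ : ℕ → ℕ), StrictMono σ ∧ Tendsto (fun j => z (σ j)) atTop (𝓝 w))
    (u : X) (r : ℝ) (hr : 0 < r)
    (hmin : ∀ x, dist x u ≤ 2*r → J u ≤ J x)
    (hdeg : ∀ δ, 0 < δ → ∃ x, dist x u = r ∧ J x < J u + δ) :
    ∃ w, J' w = 0 ∧ dist w u = r := by
  classical
  have hJc : Continuous J := by
    rw [continuous_iff_continuousAt]; exact fun x => (hdiff x).continuousAt
  set A : Set X := {x | r/2 ≤ dist x u} ∩ {x | dist x u ≤ 3*r/2} with hA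
  have hAc : IsClosed A :=
    (isClosed_le continuous_const (continuous_id.dist continuous_const)).inter
      (isClosed_le (continuous_id.dist continuous_const) continuous_const)
  haveI : CompleteSpace A := hAc.completeSpace_coe
  have hJA : ∀ y : A, J u ≤ J y.val := by
    rintro ⟨y, hy1, hy2⟩
    exact hmin y (by simp only [Set.mem_setOf_eq] at hy2; linarith)
  -- epsilon sequence
  set ε : ℕ → ℝ := fun j => min (1/(j+1:ℝ)) (r/4) with hε
  have hεpos : ∀ j, 0 < ε j := fun j => lt_min (by positivity) (by linarith)
  have hεr : ∀ j, ε j ≤ r/4 := fun j => min_le_right _ _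
  have hε0 : Tendsto ε atTop (𝓝 0) := by
    apply squeeze_zero (fun j => (hεpos j).le) (fun j => min_le_left _ _)
    exact tendsto_one_div_add_atTop_nhds_zero_nat
  -- points on the sphere
  have hx : ∀ j, ∃ x, dist x u = r ∧ J x < J u + (ε j)^2 := by
    intro j; exact hdeg _ (by positivity)
  choose x hx1 hx2 using hx
  have hxA : ∀ j, x j ∈ A := by
    intro j
    constructor <;> simp only [Set.mem_setOf_eq, hx1] <;> linarith
  -- apply Ekeland for each j
  have hEk : ∀ j, ∃ y : A, (J y.val + ε j * dist (x j) y.val ≤ J (x j)) ∧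
      ∀ z : A, J y.val ≤ J z.val + ε j * dist y.val z.val := by
    intro j
    obtain ⟨y, h1, h2⟩ := my_ekeland (fun y : A => J y.val)
      ((hJc.comp continuous_subtype_val).lowerSemicontinuous)
      (J u) hJA (ε j) (hεpos j) ⟨x j, hxA j⟩
    refine ⟨y, ?_, ?_⟩
    · simpa [Subtype.dist_eq] using h1
    · intro z; simpa [Subtype.dist_eq] using h2 z
  choose y hy1 hy2 using hEk
  -- basic estimates
  have hJy_ub : ∀ j, J (y j).val ≤ J u + (ε j)^2 := by
    intro j
    have := hy1 j
    nlinarith [dist_nonneg (x := x j) (y := (y j).val), (hεpos j).le, hx2 j]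
  have hdxy : ∀ j, dist (x j) (y j).val ≤ ε j := by
    intro j
    have h1 := hy1 j
    have h2 := hJA (y j)
    have h3 := hx2 j
    have h4 := hεpos j
    nlinarith
  have hdyu_lb : ∀ j, r - ε j ≤ dist (y j).val u := by
    intro j
    have := dist_triangle (x j) (y j).val u
    rw [hx1 j] at this
    linarith [hdxy j]
  have hdyu_ub : ∀ j, dist (y j).val u ≤ r + ε j := by
    intro j
    have := dist_triangle (y j).val (x j) u
    rw [hx1 j, dist_comm ((y j) : X) (x j)] at this
    linarith [hdxy j]
  -- derivative bound via interior variational inequality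
  have hder : ∀ j, ‖J' (y j).val‖ ≤ ε j := by
    intro j
    apply norm_deriv_le_of_varineq (hdiff _) (hεpos j).le (show (0:ℝ) < r/4 by linarith)
    intro z hz
    have hzu_lb : r/2 < dist z u := by
      have := dist_triangle (y j).val z u
      have h5 := hdyu_lb j
      have h6 := hεr j
      rw [dist_comm z (y j).val] at hz
      linarith [abs_dist_sub_le z (y j).val u, abs_le.mp (abs_dist_sub_le z (y j).val u) |>.1]
    have hzu_ub : dist z u < 3*r/2 := by
      have := dist_triangle z (y j).val u
      have h5 := hdyu_ub j
      have h6 := hεr j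
      linarith
    exact hy2 j ⟨z, le_of_lt hzu_lb, le_of_lt hzu_ub⟩
  -- PS and conclusion
  have hJytend : Tendsto (fun j => J (y j).val) atTop (𝓝 (J u)) := by
    apply tendsto_of_tendsto_of_tendsto_of_le_of_le (g := fun _ => J u)
      (h := fun j => J u + (ε j)^2) tendsto_const_nhds ?_ (fun j => hJA (y j)) hJy_ub
    have : Tendsto (fun j => J u + (ε j)^2) atTop (𝓝 (J u + 0^2)) :=
      tendsto_const_nhds.add (hε0.pow 2)
    simpa using this
  have hJ'ytend : Tendsto (fun j => ‖J' (y j).val‖) atTop (𝓝 0) :=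
    squeeze_zero (fun j => norm_nonneg _) hder hε0
  obtain ⟨w, σ, hw1, hw2, hσ, hwt⟩ :=
    crit_of_PS J J' hJc hcont hPS (fun j => (y j).val) (J u) hJytend hJ'ytend
  refine ⟨w, hw1, ?_⟩
  have l1 : Tendsto (fun j => dist ((y (σ j)) : X) u) atTop (𝓝 (dist w u)) :=
    (Continuous.dist continuous_id continuous_const).continuousAt.tendsto.comp hwt
  have hεσ : Tendsto (fun j => ε (σ j)) atTop (𝓝 0) := hε0.comp hσ.tendsto_atTop
  have l2 : Tendsto (fun j => dist ((y (σ j)) : X) u) atTop (𝓝 r) := by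
    apply tendsto_of_tendsto_of_tendsto_of_le_of_le (g := fun j => r - ε (σ j))
      (h := fun j => r + ε (σ j)) ?_ ?_ (fun j => hdyu_lb (σ j)) (fun j => hdyu_ub (σ j))
    · simpa using tendsto_const_nhds.sub hεσ
    · simpa using tendsto_const_nhds.add hεσ
  exact tendsto_nhds_unique l1 l2

end Deg


section MP
variable {X : Type*} [NormedAddCommGroup X] [NormedSpace ℝ X] [CompleteSpace X]

set_option maxHeartbeats 1000000 in
theorem mountain_pass (J : X → ℝ) (J' : X → (X →L[ℝ] ℝ))
    (hdiff : ∀ w : X, HasFDerivAt J (J' w) w) (hcont : Continuous J')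
    (hPS : ∀ z : ℕ → X,
      (∃ μ : ℝ, Tendsto (fun j => J (z j)) atTop (𝓝 μ)) →
      Tendsto (fun j => ‖J' (z j)‖) atTop (𝓝 (0 : ℝ)) →
      ∃ (w : X) (σ : ℕ → ℕ), StrictMono σ ∧ Tendsto (fun j => z (σ j)) atTop (𝓝 w))
    (u₁ u₂ : X) (a : ℝ) (ha1 : J u₁ < a) (ha2 : J u₂ < a)
    (hcross : ∀ γ : C(unitInterval, X), γ 0 = u₁ → γ 1 = u₂ → ∃ t, a ≤ J (γ t)) :
    ∃ w, J' w = 0 ∧ a ≤ J w := by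
  classical
  have hJc : Continuous J := by
    rw [continuous_iff_continuousAt]; exact fun x => (hdiff x).continuousAt
  -- the space of paths
  set Γ : Set C(unitInterval, X) := {γ | γ 0 = u₁ ∧ γ 1 = u₂} with hΓ
  have hΓc : IsClosed Γ := by
    apply IsClosed.inter
    · exact isClosed_eq (continuous_eval_const 0) continuous_const
    · exact isClosed_eq (continuous_eval_const 1) continuous_const
  haveI : CompleteSpace Γ := hΓc.completeSpace_coe
  have hline : Continuous (fun t : unitInterval => u₁ + (t : ℝ) • (u₂ - u₁)) := by
    exact continuous_const.add ((continuous_subtype_val).smul continuous_const)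
  set γ₀ : Γ := ⟨⟨_, hline⟩, by constructor <;> simp⟩ with hγ₀
  haveI : Nonempty Γ := ⟨γ₀⟩
  -- the max functional
  set Φ : C(unitInterval, X) → ℝ := fun γ => ⨆ t, J (γ t) with hΦ
  have hmaxpt : ∀ γ : C(unitInterval, X), ∃ t, ∀ s, J (γ s) ≤ J (γ t) := by
    intro γ
    obtain ⟨t, -, ht⟩ := isCompact_univ.exists_isMaxOn Set.univ_nonempty
      ((hJc.comp γ.continuous).continuousOn)
    exact ⟨t, fun s => ht (Set.mem_univ s)⟩
  have hbddr : ∀ γ : C(unitInterval, X), BddAbove (Set.range fun t => J (γ t)) := by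
    intro γ
    obtain ⟨t, ht⟩ := hmaxpt γ
    exact ⟨J (γ t), by rintro x ⟨s, rfl⟩; exact ht s⟩
  have hΦge : ∀ (γ : C(unitInterval, X)) (t), J (γ t) ≤ Φ γ := fun γ t =>
    le_ciSup (hbddr γ) t
  have hΦeq : ∀ (γ : C(unitInterval, X)) (t), (∀ s, J (γ s) ≤ J (γ t)) → Φ γ = J (γ t) :=
    fun γ t ht => le_antisymm (ciSup_le ht) (hΦge γ t)
  have hΦa : ∀ γ : Γ, a ≤ Φ γ.val := by
    rintro ⟨γ, h1, h2⟩
    obtain ⟨t, ht⟩ := hcross γ h1 h2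
    exact ht.trans (hΦge γ t)
  -- lower semicontinuity of Φ on Γ
  have hlsc : LowerSemicontinuous (fun γ : Γ => Φ γ.val) := by
    intro γ b hb
    obtain ⟨t, ht⟩ := hmaxpt γ.val
    have hb' : b < Φ γ.val := hb
    have hgt : b < J (γ.val t) := by rwa [hΦeq γ.val t ht] at hb'
    have hgc : Continuous fun ξ : Γ => J (ξ.val t) :=
      hJc.comp ((continuous_eval_const t).comp continuous_subtype_val)
    filter_upwards [hgc.continuousAt.preimage_mem_nhds (Ioi_mem_nhds hgt)] with ξ hξ
    exact lt_of_lt_of_le hξ (hΦge ξ.val t)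
  -- the min-max value
  set c : ℝ := ⨅ γ : Γ, Φ γ.val with hc
  have hbddb : BddBelow (Set.range fun γ : Γ => Φ γ.val) :=
    ⟨a, by rintro x ⟨γ, rfl⟩; exact hΦa γ⟩
  have hac : a ≤ c := le_ciInf hΦa
  have hcle : ∀ γ : Γ, c ≤ Φ γ.val := fun γ => ciInf_le hbddb γ
  -- Core claim
  have core : ∀ ε : ℝ, 0 < ε → ε^2 < a - J u₁ → ε^2 < a - J u₂ →
      ∃ x : X, c - ε^2 ≤ J x ∧ J x ≤ c + ε^2 ∧ ‖J' x‖ ≤ 2*ε := by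
    intro ε hε hεa1 hεa2
    obtain ⟨γe, hγe⟩ : ∃ γ : Γ, Φ γ.val < c + ε^2 := by
      apply exists_lt_of_ciInf_lt
      rw [← hc]; nlinarith
    obtain ⟨γ, hek1, hek2⟩ := my_ekeland (fun γ : Γ => Φ γ.val) hlsc a hΦa ε hε γe
    have hΦub : Φ γ.val < c + ε^2 := by
      nlinarith [dist_nonneg (x := γe) (y := γ)]
    have hΦlb : c ≤ Φ γ.val := hcle γ
    by_contra hcon
    push_neg at hcon
    -- the high set M
    set M : Set unitInterval := {t | c - ε^2 ≤ J (γ.val t)} with hM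
    have hMc : IsClosed M := isClosed_le continuous_const (hJc.comp γ.val.continuous)
    have hMcp : IsCompact M := hMc.isCompact
    have hMne : M.Nonempty := by
      obtain ⟨t, ht⟩ := hmaxpt γ.val
      refine ⟨t, ?_⟩
      have := hΦeq γ.val t ht
      simp only [hM, Set.mem_setOf_eq]
      nlinarith
    have hend : ∀ t ∈ M, J u₁ < J (γ.val t) ∧ J u₂ < J (γ.val t) := by
      intro t ht
      simp only [hM, Set.mem_setOf_eq] at ht
      constructor <;> nlinarith
    have h0M : (0 : unitInterval) ∉ M := by
      intro h
      have := (hend 0 h).1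
      rw [γ.prop.1] at this
      exact lt_irrefl _ this
    have h1M : (1 : unitInterval) ∉ M := by
      intro h
      have := (hend 1 h).2
      rw [γ.prop.2] at this
      exact lt_irrefl _ this
    have hsteep : ∀ t ∈ M, 2*ε < ‖J' (γ.val t)‖ := by
      intro t ht
      exact hcon (γ.val t) ht ((hΦge γ.val t).trans hΦub.le)
    -- descent directions
    have hdir : ∀ t ∈ M, ∃ v : X, ‖v‖ ≤ 1 ∧ J' (γ.val t) v < -(2*ε) := fun t ht =>
      exists_descent_dir _ (by positivity) (hsteep t ht)
    choose! v hv1 hv2 using hdir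
    -- open cover
    set U : unitInterval → Set unitInterval :=
      fun i => {s | J' (γ.val s) (v i) < -(2*ε)} with hU
    have happly : ∀ w : X, Continuous fun s : unitInterval => J' (γ.val s) w := by
      intro w
      exact (ContinuousLinearMap.apply ℝ ℝ w).continuous.comp (hcont.comp γ.val.continuous)
    have hUopen : ∀ i, IsOpen (U i) := fun i => isOpen_lt (happly (v i)) continuous_const
    have hMcover : M ⊆ ⋃ i ∈ M, U i := by
      intro t ht
      exact Set.mem_biUnion ht (hv2 t ht)
    obtain ⟨b, hbM, hbfin, hbcov⟩ :=
      hMcp.elim_finite_subcover_image (fun i _ => hUopen i) hMcover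
    set F : Finset unitInterval := hbfin.toFinset with hF
    have hFcov : ∀ t ∈ M, ∃ i ∈ F, t ∈ U i := by
      intro t ht
      obtain ⟨i, hi, hti⟩ := Set.mem_iUnion₂.mp (hbcov ht)
      exact ⟨i, hbfin.mem_toFinset.mpr hi, hti⟩
    -- partition functions
    set ψ : unitInterval → unitInterval → ℝ :=
      fun i s => max 0 (-(J' (γ.val s) (v i)) - 2*ε) with hψ
    have hψc : ∀ i, Continuous (ψ i) := fun i =>
      continuous_const.max (((happly (v i)).neg).sub continuous_const)
    have hψnn : ∀ i s, 0 ≤ ψ i s := fun i s => le_max_left _ _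
    have hψpos : ∀ i s, s ∈ U i → 0 < ψ i s := by
      intro i s hs
      simp only [hU, Set.mem_setOf_eq] at hs
      simp only [hψ, lt_max_iff]
      right; linarith
    have hψU : ∀ i s, 0 < ψ i s → s ∈ U i := by
      intro i s hs
      simp only [hψ, lt_max_iff, lt_irrefl, false_or] at hs
      simp only [hU, Set.mem_setOf_eq]
      linarith
    set D : unitInterval → ℝ :=
      fun s => (∑ i ∈ F, ψ i s) + Metric.infDist s M with hD
    have hDpos : ∀ s, 0 < D s := by
      intro s
      by_cases hs : s ∈ M
      · obtain ⟨i, hiF, hti⟩ := hFcov s hs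
        have h1 : 0 < ∑ i ∈ F, ψ i s :=
          Finset.sum_pos' (fun j _ => hψnn j s) ⟨i, hiF, hψpos i s hti⟩
        have h2 : 0 ≤ Metric.infDist s M := Metric.infDist_nonneg
        simp only [hD]; linarith
      · have h1 : 0 < Metric.infDist s M := (hMc.notMem_iff_infDist_pos hMne).mp hs
        have h2 : 0 ≤ ∑ i ∈ F, ψ i s := Finset.sum_nonneg (fun j _ => hψnn j s)
        simp only [hD]; linarith
    have hDc : Continuous D :=
      (continuous_finset_sum F fun i _ => hψc i).add (Metric.continuous_infDist_pt M)
    -- the vector field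
    set u₀ : unitInterval → X := fun s => ∑ i ∈ F, (ψ i s / D s) • v i with hu₀
    have hu₀c : Continuous u₀ := continuous_finset_sum _ fun i _ =>
      ((hψc i).div hDc (fun s => (hDpos s).ne')).smul continuous_const
    have hvnorm : ∀ i ∈ F, ‖v i‖ ≤ 1 := by
      intro i hiF
      exact hv1 i (hbM (hbfin.mem_toFinset.mp hiF))
    have hsumle : ∀ s, ∑ i ∈ F, ψ i s / D s ≤ 1 := by
      intro s
      rw [← Finset.sum_div, div_le_one (hDpos s)]
      simp only [hD]
      linarith [Metric.infDist_nonneg (x := s) (s := M)]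
    have hu₀norm : ∀ s, ‖u₀ s‖ ≤ 1 := by
      intro s
      calc ‖u₀ s‖ ≤ ∑ i ∈ F, ‖(ψ i s / D s) • v i‖ := norm_sum_le _ _
        _ ≤ ∑ i ∈ F, ψ i s / D s := by
            apply Finset.sum_le_sum
            intro i hiF
            rw [norm_smul, Real.norm_eq_abs,
              abs_of_nonneg (div_nonneg (hψnn i s) (hDpos s).le)]
            calc ψ i s / D s * ‖v i‖ ≤ ψ i s / D s * 1 :=
                  mul_le_mul_of_nonneg_left (hvnorm i hiF)
                    (div_nonneg (hψnn i s) (hDpos s).le)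
              _ = ψ i s / D s := mul_one _
        _ ≤ 1 := hsumle s
    -- cutoff
    have h0inf : 0 < Metric.infDist (0 : unitInterval) M :=
      (hMc.notMem_iff_infDist_pos hMne).mp h0M
    have h1inf : 0 < Metric.infDist (1 : unitInterval) M :=
      (hMc.notMem_iff_infDist_pos hMne).mp h1M
    set ρ : ℝ := min (Metric.infDist (0 : unitInterval) M)
      (Metric.infDist (1 : unitInterval) M) with hρdef
    have hρ : 0 < ρ := lt_min h0inf h1inf
    set η : unitInterval → ℝ := fun s => max 0 (1 - Metric.infDist s M / ρ) with hη
    have hηc : Continuous η :=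
      continuous_const.max (continuous_const.sub ((Metric.continuous_infDist_pt M).div_const ρ))
    have hηnn : ∀ s, 0 ≤ η s := fun s => le_max_left _ _
    have hηle : ∀ s, η s ≤ 1 := by
      intro s
      apply max_le (by norm_num)
      have := Metric.infDist_nonneg (x := s) (s := M)
      have := hρ
      rw [sub_le_self_iff]
      positivity
    have hηM : ∀ s ∈ M, η s = 1 := by
      intro s hs
      simp only [hη, Metric.infDist_zero_of_mem hs, zero_div, sub_zero]
      norm_num
    have hη0 : η 0 = 0 := by
      simp only [hη]
      rw [max_eq_left]
      rw [sub_nonpos, le_div_iff₀ hρ, one_mul]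
      exact le_trans (min_le_left _ _) (le_refl _)
    have hη1 : η 1 = 0 := by
      simp only [hη]
      rw [max_eq_left]
      rw [sub_nonpos, le_div_iff₀ hρ, one_mul]
      exact le_trans (min_le_right _ _) (le_refl _)
    set uu : unitInterval → X := fun s => η s • u₀ s with huu
    have huuc : Continuous uu := hηc.smul hu₀c
    have huunorm : ∀ s, ‖uu s‖ ≤ 1 := by
      intro s
      rw [huu]
      simp only
      rw [norm_smul, Real.norm_eq_abs, abs_of_nonneg (hηnn s)]
      calc η s * ‖u₀ s‖ ≤ 1 * 1 :=
        mul_le_mul (hηle s) (hu₀norm s) (norm_nonneg _) zero_le_one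
        _ = 1 := mul_one _
    have huu0 : uu 0 = 0 := by simp only [huu, hη0, zero_smul]
    have huu1 : uu 1 = 0 := by simp only [huu, hη1, zero_smul]
    -- descent on M
    have hdescent : ∀ s ∈ M, J' (γ.val s) (uu s) ≤ -(2*ε) := by
      intro s hs
      have hsum1 : ∑ i ∈ F, ψ i s / D s = 1 := by
        rw [← Finset.sum_div, div_eq_one_iff_eq (hDpos s).ne']
        simp only [hD, Metric.infDist_zero_of_mem hs, add_zero]
      have hmap : J' (γ.val s) (uu s) = ∑ i ∈ F, (ψ i s / D s) * J' (γ.val s) (v i) := by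
        rw [huu]
        simp only [hηM s hs, one_smul, hu₀, map_sum, map_smul, smul_eq_mul]
      rw [hmap]
      calc ∑ i ∈ F, (ψ i s / D s) * J' (γ.val s) (v i)
          ≤ ∑ i ∈ F, (ψ i s / D s) * (-(2*ε)) := by
            apply Finset.sum_le_sum
            intro i hiF
            rcases eq_or_lt_of_le (hψnn i s) with h | h
            · rw [← h]; simp
            · have := hψU i s h
              simp only [hU, Set.mem_setOf_eq] at this
              apply mul_le_mul_of_nonneg_left this.le (div_nonneg (hψnn i s) (hDpos s).le)
        _ = -(2*ε) := by rw [← Finset.sum_mul, hsum1, one_mul]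
    -- bound on derivative norms along γ
    obtain ⟨tC, -, htC⟩ := isCompact_univ.exists_isMaxOn Set.univ_nonempty
      (((hcont.comp γ.val.continuous).norm).continuousOn)
    set C : ℝ := ‖J' (γ.val tC)‖ with hCdef
    have hC : ∀ s, ‖J' (γ.val s)‖ ≤ C := fun s => htC (Set.mem_univ s)
    have hC0 : 0 ≤ C := le_trans (norm_nonneg _) (hC 0)
    -- uniform continuity of J' on a compact tube
    set K : Set X := (fun p : unitInterval × ℝ => γ.val p.1 + p.2 • uu p.1) ''
      (Set.univ ×ˢ Set.Icc 0 1) with hK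
    have hKcp : IsCompact K := (isCompact_univ.prod isCompact_Icc).image
      ((γ.val.continuous.comp continuous_fst).add
        (continuous_snd.smul (huuc.comp continuous_fst)))
    have hUC := hKcp.uniformContinuousOn_of_continuous hcont.continuousOn
    obtain ⟨δ, hδ, hδUC⟩ := Metric.uniformContinuousOn_iff.mp hUC (ε/2) (by positivity)
    -- step size
    have hCe : (0:ℝ) < 2*(C + ε/2 + 1) := by linarith
    set τ : ℝ := min (min (δ/2) (ε/4)) (min 1 (ε^2/(2*(C + ε/2 + 1)))) with hτdef
    have hτpos : 0 < τ := by
      apply lt_min (lt_min (by linarith) (by linarith))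
      exact lt_min one_pos (div_pos (pow_pos hε 2) hCe)
    have hτδ : τ < δ := lt_of_le_of_lt (le_trans (min_le_left _ _) (min_le_left _ _))
      (by linarith)
    have hτε : τ ≤ ε/4 := le_trans (min_le_left _ _) (min_le_right _ _)
    have hτ1 : τ ≤ 1 := le_trans (min_le_right _ _) (min_le_left _ _)
    have hτC : τ * (C + ε/2) ≤ ε^2/2 := by
      have h1 : τ ≤ ε^2/(2*(C + ε/2 + 1)) := le_trans (min_le_right _ _) (min_le_right _ _)
      calc τ * (C + ε/2) ≤ ε^2/(2*(C + ε/2 + 1)) * (C + ε/2) := by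
            apply mul_le_mul_of_nonneg_right h1 (by linarith)
        _ ≤ ε^2/2 := by
            rw [div_mul_eq_mul_div, div_le_div_iff₀ hCe (by norm_num)]
            nlinarith [sq_nonneg ε, hC0, hε.le]
    -- the perturbed path
    set ξfun : unitInterval → X := fun s => γ.val s + τ • uu s with hξfun
    have hξc : Continuous ξfun := γ.val.continuous.add (continuous_const.smul huuc)
    set ξ : C(unitInterval, X) := ⟨ξfun, hξc⟩ with hξdef
    have hξΓ : ξ ∈ Γ := by
      constructor
      · show ξfun 0 = u₁
        simp only [hξfun, huu0, smul_zero, add_zero]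
        exact γ.prop.1
      · show ξfun 1 = u₂
        simp only [hξfun, huu1, smul_zero, add_zero]
        exact γ.prop.2
    have hdistγξ : dist γ (⟨ξ, hξΓ⟩ : Γ) ≤ τ := by
      rw [Subtype.dist_eq]
      apply ContinuousMap.dist_le hτpos.le |>.mpr
      intro s
      show dist (γ.val s) (ξfun s) ≤ τ
      rw [hξfun]
      simp only [dist_eq_norm]
      rw [show γ.val s - (γ.val s + τ • uu s) = -(τ • uu s) by abel]
      rw [norm_neg, norm_smul, Real.norm_eq_abs, abs_of_pos hτpos]
      calc τ * ‖uu s‖ ≤ τ * 1 := mul_le_mul_of_nonneg_left (huunorm s) hτpos.le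
        _ = τ := mul_one _
    -- tube membership
    have hγK : ∀ s, γ.val s ∈ K := by
      intro s
      refine ⟨(s, 0), ⟨Set.mem_univ _, by norm_num⟩, ?_⟩
      simp
    have htube : ∀ (s) (b : ℝ), 0 ≤ b → b ≤ τ → γ.val s + b • uu s ∈ K := by
      intro s b hb0 hbτ
      exact ⟨(s, b), ⟨Set.mem_univ _, hb0, hbτ.trans hτ1⟩, rfl⟩
    -- Taylor estimate
    have hTaylor : ∀ s, J (ξfun s) ≤ J (γ.val s) + τ * (J' (γ.val s) (uu s)) + τ * (ε/2) := by
      intro s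
      set g : X → ℝ := fun z => J z - J' (γ.val s) z with hg
      have hg' : ∀ z, HasFDerivAt g (J' z - J' (γ.val s)) z := fun z =>
        (hdiff z).sub ((J' (γ.val s)).hasFDerivAt)
      have hseg : ∀ z ∈ segment ℝ (γ.val s) (ξfun s), ‖J' z - J' (γ.val s)‖ ≤ ε/2 := by
        intro z hz
        rw [segment_eq_image'] at hz
        obtain ⟨θ, hθ, rfl⟩ := hz
        show ‖J' (γ.val s + θ • (ξfun s - γ.val s)) - J' (γ.val s)‖ ≤ ε/2
        have hzz : γ.val s + θ • (ξfun s - γ.val s) = γ.val s + (θ*τ) • uu s := by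
          rw [hξfun]
          simp only
          rw [show γ.val s + τ • uu s - γ.val s = τ • uu s by abel, smul_smul]
        rw [hzz]
        have hθτ0 : 0 ≤ θ*τ := mul_nonneg hθ.1 hτpos.le
        have hθτ1 : θ*τ ≤ τ := by nlinarith [hθ.2, hτpos.le]
        have hzK : γ.val s + (θ*τ) • uu s ∈ K := htube s (θ*τ) hθτ0 hθτ1
        have hdistz : dist (γ.val s + (θ*τ) • uu s) (γ.val s) < δ := by
          rw [dist_eq_norm, show γ.val s + (θ*τ) • uu s - γ.val s = (θ*τ) • uu s by abel,
            norm_smul, Real.norm_eq_abs, abs_of_nonneg hθτ0]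
          calc θ*τ*‖uu s‖ ≤ θ*τ*1 := mul_le_mul_of_nonneg_left (huunorm s) hθτ0
            _ = θ*τ := mul_one _
            _ ≤ τ := hθτ1
            _ < δ := hτδ
        have := hδUC _ hzK _ (hγK s) hdistz
        rw [dist_eq_norm] at this
        exact this.le
      have hconv := (convex_segment (γ.val s) (ξfun s)).norm_image_sub_le_of_norm_hasFDerivWithin_le
        (fun z _ => (hg' z).hasFDerivWithinAt) hseg
        (left_mem_segment ℝ _ _) (right_mem_segment ℝ _ _)
      have hnorm1 : ‖ξfun s - γ.val s‖ ≤ τ := by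
        rw [hξfun]
        simp only
        rw [show γ.val s + τ • uu s - γ.val s = τ • uu s by abel, norm_smul,
          Real.norm_eq_abs, abs_of_pos hτpos]
        calc τ * ‖uu s‖ ≤ τ * 1 := mul_le_mul_of_nonneg_left (huunorm s) hτpos.le
          _ = τ := mul_one _
      have hlin : (J' (γ.val s)) (ξfun s) - (J' (γ.val s)) (γ.val s) = τ * J' (γ.val s) (uu s) := by
        rw [← map_sub, hξfun]
        simp only
        rw [show γ.val s + τ • uu s - γ.val s = τ • uu s by abel, map_smul, smul_eq_mul]
      have hgdiff : g (ξfun s) - g (γ.val s)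
          = J (ξfun s) - J (γ.val s) - τ * J' (γ.val s) (uu s) := by
        have e1 : g (ξfun s) - g (γ.val s) = (J (ξfun s) - J (γ.val s))
            - ((J' (γ.val s)) (ξfun s) - (J' (γ.val s)) (γ.val s)) := by
          simp only [hg]; ring
        rw [e1, hlin]
      have habs : |g (ξfun s) - g (γ.val s)| ≤ ε/2 * τ := by
        rw [← Real.norm_eq_abs]
        calc ‖g (ξfun s) - g (γ.val s)‖ ≤ ε/2 * ‖ξfun s - γ.val s‖ := hconv
          _ ≤ ε/2 * τ := mul_le_mul_of_nonneg_left hnorm1 (by linarith)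
      have := (abs_le.mp habs).2
      rw [hgdiff] at this
      linarith
    -- the contradiction
    obtain ⟨tm, htm⟩ := hmaxpt ξ
    have hΦξ : Φ ξ = J (ξfun tm) := hΦeq ξ tm htm
    have hekk : Φ γ.val ≤ Φ ξ + ε * τ := by
      have h2 := hek2 ⟨ξ, hξΓ⟩
      have h3 := mul_le_mul_of_nonneg_left hdistγξ hε.le
      simp only at h2
      linarith
    have hτεpos : 0 < τ * ε := mul_pos hτpos hε
    by_cases htmM : tm ∈ M
    · have h1 := hTaylor tm
      have h2 := hdescent tm htmM
      have h3 : J (γ.val tm) ≤ Φ γ.val := hΦge γ.val tm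
      have h4 : τ * J' (γ.val tm) (uu tm) ≤ τ * (-(2*ε)) :=
        mul_le_mul_of_nonneg_left h2 hτpos.le
      have h5 : J (ξfun tm) ≤ Φ γ.val - (3/2)*(τ*ε) := by nlinarith
      rw [hΦξ] at hekk
      nlinarith
    · have h4 : J (γ.val tm) < c - ε^2 := by
        simp only [hM, Set.mem_setOf_eq] at htmM
        linarith [not_le.mp htmM]
      have h5 : J' (γ.val tm) (uu tm) ≤ C := by
        have ha := (J' (γ.val tm)).le_opNorm (uu tm)
        have hb2 : ‖J' (γ.val tm)‖ * ‖uu tm‖ ≤ C * 1 :=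
          mul_le_mul (hC tm) (huunorm tm) (norm_nonneg _) hC0
        calc J' (γ.val tm) (uu tm) ≤ |J' (γ.val tm) (uu tm)| := le_abs_self _
          _ = ‖J' (γ.val tm) (uu tm)‖ := (Real.norm_eq_abs _).symm
          _ ≤ C := by linarith
      have h1 := hTaylor tm
      have h6 : τ * J' (γ.val tm) (uu tm) ≤ τ * C := mul_le_mul_of_nonneg_left h5 hτpos.le
      have h7 : ε * τ ≤ ε^2/4 := by
        calc ε * τ ≤ ε * (ε/4) := mul_le_mul_of_nonneg_left hτε hε.le
          _ = ε^2/4 := by ring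
      have h8 : τ * C + τ * (ε/2) ≤ ε^2/2 := by nlinarith [hτC]
      rw [hΦξ] at hekk
      nlinarith
  -- conclude from the core claim via Palais-Smale
  set b : ℝ := min (a - J u₁) (a - J u₂) with hb
  have hbpos : 0 < b := lt_min (by linarith) (by linarith)
  set d : ℝ := min 1 (b/2) with hd
  have hdpos : 0 < d := lt_min one_pos (by linarith)
  have hd2 : d^2 < b := by
    have h1 : d ≤ 1 := min_le_left _ _
    have h2 : d ≤ b/2 := min_le_right _ _
    nlinarith
  set εs : ℕ → ℝ := fun j => min (1/(j+1:ℝ)) d with hεs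
  have hεpos : ∀ j, 0 < εs j := fun j => lt_min (by positivity) hdpos
  have hεd : ∀ j, εs j ≤ d := fun j => min_le_right _ _
  have hε0 : Tendsto εs atTop (𝓝 0) := by
    apply squeeze_zero (fun j => (hεpos j).le) (fun j => min_le_left _ _)
    exact tendsto_one_div_add_atTop_nhds_zero_nat
  have hsq : ∀ j, (εs j)^2 < b := fun j =>
    lt_of_le_of_lt (pow_le_pow_left₀ (hεpos j).le (hεd j) 2) hd2
  have hcore : ∀ j, ∃ x : X, c - (εs j)^2 ≤ J x ∧ J x ≤ c + (εs j)^2 ∧ ‖J' x‖ ≤ 2*(εs j) := by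
    intro j
    apply core (εs j) (hεpos j)
    · exact lt_of_lt_of_le (hsq j) (min_le_left _ _)
    · exact lt_of_lt_of_le (hsq j) (min_le_right _ _)
  choose z hz1 hz2 hz3 using hcore
  have hsq0 : Tendsto (fun j => (εs j)^2) atTop (𝓝 0) := by
    have := hε0.pow 2
    simpa using this
  have hJz : Tendsto (fun j => J (z j)) atTop (𝓝 c) := by
    apply tendsto_of_tendsto_of_tendsto_of_le_of_le (g := fun j => c - (εs j)^2)
      (h := fun j => c + (εs j)^2) ?_ ?_ hz1 hz2
    · simpa using tendsto_const_nhds.sub hsq0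
    · simpa using tendsto_const_nhds.add hsq0
  have hJ'z : Tendsto (fun j => ‖J' (z j)‖) atTop (𝓝 0) := by
    apply squeeze_zero (fun j => norm_nonneg _) hz3
    have h9 := hε0.const_mul 2
    rw [mul_zero] at h9
    exact h9
  obtain ⟨w, σ, hw1, hw2, -, -⟩ := crit_of_PS J J' hJc hcont hPS z c hJz hJ'z
  exact ⟨w, hw1, by rw [hw2]; exact hac⟩

end MP


section Main
variable {X : Type*} [NormedAddCommGroup X] [NormedSpace ℝ X] [CompleteSpace X]

theorem aux_min_case (J : X → ℝ) (J' : X → (X →L[ℝ] ℝ))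
    (hdiff : ∀ w : X, HasFDerivAt J (J' w) w) (hcont : Continuous J')
    (hPS : ∀ z : ℕ → X,
      (∃ μ : ℝ, Tendsto (fun j => J (z j)) atTop (𝓝 μ)) →
      Tendsto (fun j => ‖J' (z j)‖) atTop (𝓝 (0 : ℝ)) →
      ∃ (w : X) (σ : ℕ → ℕ), StrictMono σ ∧ Tendsto (fun j => z (σ j)) atTop (𝓝 w))
    (u₁ u₂ : X) (hne : u₁ ≠ u₂)
    (h1 : IsLocalMin J u₁) (h2 : IsLocalMin J u₂) :
    ∃ u₃ : X, J' u₃ = 0 ∧ u₃ ≠ u₁ ∧ u₃ ≠ u₂ := by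
  obtain ⟨r₁, hr₁, hb₁⟩ := Metric.eventually_nhds_iff.mp h1
  obtain ⟨r₂, hr₂, hb₂⟩ := Metric.eventually_nhds_iff.mp h2
  have hd12 : 0 < dist u₁ u₂ := dist_pos.mpr hne
  set r : ℝ := min (min (r₁/3) (r₂/3)) (dist u₁ u₂ / 4) with hrdef
  have hr : 0 < r := lt_min (lt_min (by linarith) (by linarith)) (by linarith)
  have hrm : r ≤ min (r₁/3) (r₂/3) := min_le_left _ _
  have hrr₁ : 2*r < r₁ := by
    have h := le_trans hrm (min_le_left (r₁/3) (r₂/3))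
    linarith
  have hrr₂ : 2*r < r₂ := by
    have h := le_trans hrm (min_le_right (r₁/3) (r₂/3))
    linarith
  have hr4 : 4*r ≤ dist u₁ u₂ := by
    have := min_le_right (min (r₁/3) (r₂/3)) (dist u₁ u₂ / 4)
    linarith
  have hmin1 : ∀ x, dist x u₁ ≤ 2*r → J u₁ ≤ J x := fun x hx => hb₁ (by linarith)
  have hmin2 : ∀ x, dist x u₂ ≤ 2*r → J u₂ ≤ J x := fun x hx => hb₂ (by linarith)
  by_cases hdeg1 : ∀ δ : ℝ, 0 < δ → ∃ x, dist x u₁ = r ∧ J x < J u₁ + δ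
  · obtain ⟨w, hw0, hwr⟩ := deg_case J J' hdiff hcont hPS u₁ r hr hmin1 hdeg1
    refine ⟨w, hw0, ?_, ?_⟩
    · intro h; rw [h, dist_self] at hwr; linarith
    · intro h
      rw [h] at hwr
      rw [dist_comm] at hwr
      linarith
  by_cases hdeg2 : ∀ δ : ℝ, 0 < δ → ∃ x, dist x u₂ = r ∧ J x < J u₂ + δ
  · obtain ⟨w, hw0, hwr⟩ := deg_case J J' hdiff hcont hPS u₂ r hr hmin2 hdeg2
    refine ⟨w, hw0, ?_, ?_⟩
    · intro h
      rw [h] at hwr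
      linarith
    · intro h; rw [h, dist_self] at hwr; linarith
  push_neg at hdeg1 hdeg2
  obtain ⟨δ₁, hδ₁, hs₁⟩ := hdeg1
  obtain ⟨δ₂, hδ₂, hs₂⟩ := hdeg2
  set a : ℝ := max (J u₁ + δ₁) (J u₂ + δ₂) with ha
  have ha1 : J u₁ < a := lt_of_lt_of_le (by linarith) (le_max_left _ _)
  have ha2 : J u₂ < a := lt_of_lt_of_le (by linarith) (le_max_right _ _)
  have hcross : ∀ γ : C(unitInterval, X), γ 0 = u₁ → γ 1 = u₂ → ∃ t, a ≤ J (γ t) := by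
    intro γ hγ0 hγ1
    rcases le_total (J u₁ + δ₁) (J u₂ + δ₂) with hmax | hmax
    · -- cross the sphere around u₂
      have hf : Continuous fun t : unitInterval => dist (γ t) u₂ :=
        (Continuous.dist γ.continuous continuous_const)
      have hmem : r ∈ Set.Icc (dist (γ 1) u₂) (dist (γ 0) u₂) := by
        rw [hγ0, hγ1, dist_self]
        exact ⟨hr.le, by linarith⟩
      obtain ⟨t, ht⟩ := intermediate_value_univ 1 0 hf hmem
      refine ⟨t, ?_⟩
      have := hs₂ (γ t) ht
      have haa : a ≤ J u₂ + δ₂ := max_le hmax (le_refl _)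
      linarith
    · -- cross the sphere around u₁
      have hf : Continuous fun t : unitInterval => dist (γ t) u₁ :=
        (Continuous.dist γ.continuous continuous_const)
      have hmem : r ∈ Set.Icc (dist (γ 0) u₁) (dist (γ 1) u₁) := by
        rw [hγ0, hγ1, dist_self]
        rw [dist_comm]
        exact ⟨hr.le, by linarith⟩
      obtain ⟨t, ht⟩ := intermediate_value_univ 0 1 hf hmem
      refine ⟨t, ?_⟩
      have := hs₁ (γ t) ht
      have haa : a ≤ J u₁ + δ₁ := max_le (le_refl _) hmax
      linarith
  obtain ⟨w, hw0, hwa⟩ := mountain_pass J J' hdiff hcont hPS u₁ u₂ a ha1 ha2 hcross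
  refine ⟨w, hw0, ?_, ?_⟩
  · intro h; rw [h] at hwa; linarith
  · intro h; rw [h] at hwa; linarith

end Main

/-- **Pucci–Serrin three critical points theorem.** Let `X` be a real Banach space and
`J : X → ℝ` a `C¹` functional (with Fréchet derivative `J'`) satisfying the Palais–Smale
condition. If `u₁ ≠ u₂` are both local minima (or both local maxima) of `J`, then `J`
admits a third critical point `u₃ ∉ {u₁, u₂}`. -/
theorem pucci_serrin_three_critical_points
    {X : Type*} [NormedAddCommGroup X] [NormedSpace ℝ X] [CompleteSpace X]
    (J : X → ℝ) (J' : X → (X →L[ℝ] ℝ))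
    (hdiff : ∀ w : X, HasFDerivAt J (J' w) w) (hcont : Continuous J')
    (hPS : ∀ z : ℕ → X,
      (∃ μ : ℝ, Tendsto (fun j => J (z j)) atTop (𝓝 μ)) →
      Tendsto (fun j => ‖J' (z j)‖) atTop (𝓝 (0 : ℝ)) →
      ∃ (w : X) (σ : ℕ → ℕ), StrictMono σ ∧ Tendsto (fun j => z (σ j)) atTop (𝓝 w))
    (u₁ u₂ : X) (hne : u₁ ≠ u₂)
    (hextrema : (IsLocalMin J u₁ ∧ IsLocalMin J u₂) ∨ (IsLocalMax J u₁ ∧ IsLocalMax J u₂)) :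
    ∃ u₃ : X, J' u₃ = 0 ∧ u₃ ≠ u₁ ∧ u₃ ≠ u₂ := by
  rcases hextrema with ⟨h1, h2⟩ | ⟨h1, h2⟩
  · exact aux_min_case J J' hdiff hcont hPS u₁ u₂ hne h1 h2
  · -- apply the min case to -J
    have hdiff2 : ∀ w : X, HasFDerivAt (fun x => -(J x)) (-(J' w)) w := fun w => (hdiff w).neg
    have hcont2 : Continuous (fun x => -(J' x)) := hcont.neg
    have hPS2 : ∀ z : ℕ → X,
        (∃ μ : ℝ, Tendsto (fun j => -(J (z j))) atTop (𝓝 μ)) →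
        Tendsto (fun j => ‖-(J' (z j))‖) atTop (𝓝 (0 : ℝ)) →
        ∃ (w : X) (σ : ℕ → ℕ), StrictMono σ ∧ Tendsto (fun j => z (σ j)) atTop (𝓝 w) := by
      intro z hμ h0
      apply hPS z
      · obtain ⟨μ, hμ⟩ := hμ
        exact ⟨-μ, by simpa using hμ.neg⟩
      · simpa only [norm_neg] using h0
    have h1' : IsLocalMin (fun x => -(J x)) u₁ := h1.neg
    have h2' : IsLocalMin (fun x => -(J x)) u₂ := h2.neg
    obtain ⟨w, hw0, hw1, hw2⟩ :=
      aux_min_case (fun x => -(J x)) (fun x => -(J' x)) hdiff2 hcont2 hPS2 u₁ u₂ hne h1' h2'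
    exact ⟨w, neg_eq_zero.mp hw0, hw1, hw2⟩
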